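/- The hyperplane system A coincides with the set of intersections with Hom_R(RΛ_S,ℝ) of those hyperplanes of Ǎ meeting the Tits cone: A = { Ȟ ∩ Hom_R(RΛ_S,ℝ) : Ȟ ∈ Ǎ and Ȟ ∩ T° ≠ ∅ }, where Ȟ ∩ T° is computed inside Hom_ℤ(RΛ_S,ℝ) via the inclusion Hom_R(RΛ_S,ℝ) ⊆ Hom_ℤ(RΛ_S,ℝ). -/

import Mathlib

open scoped BigOperators

noncomputable section

/-- Data of a fusion ring structure on a ring `R`, with `ℤ`-basis indexed by `ι`. -/
structure FusionData (R : Type*) [Ring R] (ι : Type*) [Fintype ι] [DecidableEq ι] where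
  /-- the distinguished basis -/
  b : Module.Basis ι ℤ R
  /-- the index of the unit -/
  unit : ι
  b_unit : b unit = 1
  basis_mul_ne_zero : ∀ j k, b j * b k ≠ 0
  c_nonneg : ∀ j k i, 0 ≤ b.repr (b j * b k) i
  /-- the involution on the index set -/
  inv : ι → ι
  inv_invol : ∀ j, inv (inv j) = j
  /-- the `ℤ`-linear extension of the involution -/
  star : R →+ R
  star_basis : ∀ j, star (b j) = b (inv j)
  star_mul : ∀ x y, star (x * y) = star y * star x
  c_unit_iff : ∀ j k, b.repr (b j * b k) unit = 1 ↔ k = inv j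

namespace FusionData

variable {R : Type*} [Ring R] {ι : Type*} [Fintype ι] [DecidableEq ι]

/-- The structure constants of a fusion ring. -/
def c (F : FusionData R ι) (j k i : ι) : ℤ := F.b.repr (F.b j * F.b k) i

/-- Nonnegativity of an element of a fusion ring: all basis coefficients are nonnegative. -/
def nonneg (F : FusionData R ι) (r : R) : Prop := ∀ i, 0 ≤ F.b.repr r i

end FusionData

/-- The basis vector `α_s` of the free module `S → R`. -/
def simRoot (R : Type*) [Ring R] {S : Type*} [DecidableEq S] (s : S) : S → R :=
  Pi.single s 1

/-- A geometric realisation of the Coxeter system `(W, S)` over a fusion ring `R`,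
together with a Frobenius–Perron dimension homomorphism. -/
structure GeomSetting (R : Type*) [Ring R] (ι : Type*) [Fintype ι] [DecidableEq ι]
    (S : Type*) [Fintype S] [DecidableEq S] (W : Type*) [Group W] where
  /-- the fusion ring structure on `R` -/
  FD : FusionData R ι
  /-- the Coxeter matrix (`0` denotes `∞`) -/
  M : CoxeterMatrix S
  /-- the Coxeter system -/
  cs : CoxeterSystem M W
  /-- the Frobenius–Perron dimension -/
  FP : R →+* ℝ
  FP_basis : ∀ i, 1 ≤ FP (FD.b i)
  FP_star : ∀ r, FP (FD.star r) = FP r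
  /-- the sesquilinear form on `RΛ_S = S → R` -/
  B : (S → R) → (S → R) → R
  B_add_left : ∀ u u' v, B (u + u') v = B u v + B u' v
  B_add_right : ∀ u v v', B u (v + v') = B u v + B u v'
  B_sesq : ∀ (x y : R) (s t : S),
    B (x • simRoot R s) (y • simRoot R t)
      = y * B (simRoot R s) (simRoot R t) * FD.star x
  cartan_diag : ∀ s, B (simRoot R s) (simRoot R s) = 2
  cartan_nonneg : ∀ s t, s ≠ t →
    FD.nonneg (-(B (simRoot R s) (simRoot R t)))
  cartan_star : ∀ s t, s ≠ t →
    B (simRoot R t) (simRoot R s)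
      = FD.star (B (simRoot R s) (simRoot R t))
  cartan_fin : ∀ s t, s ≠ t → M s t ≠ 0 →
    FP (B (simRoot R s) (simRoot R t))
      = -2 * Real.cos (Real.pi / (M s t : ℝ))
  cartan_inf : ∀ s t, s ≠ t → M s t = 0 →
    FP (B (simRoot R s) (simRoot R t)) ≤ -2
  /-- the left `R`-linear action of `W` on `RΛ_S` -/
  rep : W →* ((S → R) ≃ₗ[R] (S → R))
  rep_simple : ∀ (s : S) (v : S → R),
    rep (cs.simple s) v = v - B (simRoot R s) v • simRoot R s

namespace GeomSetting

variable {R : Type*} [Ring R] {ι : Type*} [Fintype ι] [DecidableEq ι]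
  {S : Type*} [Fintype S] [DecidableEq S] {W : Type*} [Group W]

/-- The Cartan matrix `r_{s,t}` of the realisation. -/
def cartan (G : GeomSetting R ι S W) (s t : S) : R :=
  G.B (simRoot R s) (simRoot R t)

/-- The unfolded (integral) Cartan matrix `ř`. -/
def rcheck (G : GeomSetting R ι S W) (p q : ι × S) : ℤ :=
  if p.2 = q.2 then (if p.1 = q.1 then 2 else 0)
  else G.FD.b.repr (G.FD.b q.1 * G.cartan p.2 q.2) p.1

/-- The unfolded Coxeter matrix `m̌` (`0` denotes `∞`). -/
def mcheck (G : GeomSetting R ι S W) (p q : ι × S) : ℕ :=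
  if p = q then 1
  else if G.rcheck p q = 0 then 2
  else if G.rcheck p q = -1 then 3
  else 0

/-- The Coxeter relations of the unfolded Coxeter system. -/
def rels (G : GeomSetting R ι S W) : Set (FreeGroup (ι × S)) :=
  Set.range fun pq : (ι × S) × (ι × S) =>
    (FreeGroup.of pq.1 * FreeGroup.of pq.2) ^ G.mcheck pq.1 pq.2

/-- The unfolded Coxeter group `W̌`. -/
def Wcheck (G : GeomSetting R ι S W) : Type _ := PresentedGroup G.rels

instance (G : GeomSetting R ι S W) : Group G.Wcheck :=
  QuotientGroup.Quotient.group _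

/-- The generators `(b, s)` of the unfolded Coxeter group. -/
def gen (G : GeomSetting R ι S W) (p : ι × S) : G.Wcheck := PresentedGroup.of p

end GeomSetting


section Hyperplanes

variable {X : Type*} {G : Type*} [Group G]

/-- The closed fundamental cone in coordinates. -/
def coneC (X : Type*) : Set (X → ℝ) := {Z | ∀ x, 0 ≤ Z x}

/-- The open fundamental cone in coordinates. -/
def coneCo (X : Type*) : Set (X → ℝ) := {Z | ∀ x, 0 < Z x}

/-- The coordinate hyperplane (wall) at `x`. -/
def wallH (X : Type*) (x : X) : Set (X → ℝ) := {Z | Z x = 0}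

/-- The Tits cone of an action given in coordinates on the dual space. -/
def titsT (rho : G →* ((X → ℝ) ≃ₗ[ℝ] (X → ℝ))) : Set (X → ℝ) :=
  ⋃ g : G, rho g '' coneC X

/-- The hyperplane system of an action. -/
def hypSys (rho : G →* ((X → ℝ) ≃ₗ[ℝ] (X → ℝ))) : Set (Set (X → ℝ)) :=
  {H | ∃ (g : G) (x : X), H = rho g '' wallH X x}

/-- The complexified hyperplane complement. -/
def omegaReg (rho : G →* ((X → ℝ) ≃ₗ[ℝ] (X → ℝ))) : Set ((X → ℝ) × (X → ℝ)) :=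
  (interior (titsT rho) ×ˢ interior (titsT rho)) \ ⋃ H ∈ hypSys rho, H ×ˢ H

end Hyperplanes

/-- The embedding `Hom_R(RΛ_S, ℝ) → Hom_ℤ(RΛ_S, ℝ)` in coordinates:
`Z(α_s) ↦ (Z(b_i · α_s))_{(i,s)} = (FPdim(b_i) · Z(α_s))_{(i,s)}`. -/
def GeomSetting.emb {R : Type*} [Ring R] {ι : Type*} [Fintype ι] [DecidableEq ι]
    {S : Type*} [Fintype S] [DecidableEq S] {W : Type*} [Group W]
    (G : GeomSetting R ι S W) (Z : S → ℝ) : (ι × S) → ℝ :=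
  fun p => G.FP (G.FD.b p.1) * Z p.2

variable {R : Type*} [Ring R] {ι : Type*} [Fintype ι] [DecidableEq ι]
  {S : Type*} [Fintype S] [DecidableEq S] {W : Type*} [Group W]

namespace HypAux

open CoxeterSystem

section Rep

variable {G' V : Type*} [Group G'] [AddCommGroup V] [Module ℝ V]
  (rho : G' →* (V ≃ₗ[ℝ] V))

lemma rep_mul_app (u v : G') (x : V) : rho (u * v) x = rho u (rho v x) := by
  rw [map_mul]; rfl

lemma rep_one_app (x : V) : rho 1 x = x := by rw [map_one]; rfl

lemma rep_inv_app (u : G') (x : V) : rho u (rho u⁻¹ x) = x := by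
  rw [← rep_mul_app, mul_inv_cancel, rep_one_app]

lemma rep_inv_app' (u : G') (x : V) : rho u⁻¹ (rho u x) = x := by
  rw [← rep_mul_app, inv_mul_cancel, rep_one_app]

end Rep

lemma discrete_ivt (P : ℕ → Prop) : ∀ K : ℕ, P 0 → ¬ P K → ∃ k, k < K ∧ P k ∧ ¬ P (k + 1) := by
  intro K
  induction K with
  | zero => intro h0 hK; exact absurd h0 hK
  | succ K ih =>
    intro h0 hK
    by_cases hPK : P K
    · exact ⟨K, Nat.lt_succ_self K, hPK, hK⟩
    · obtain ⟨k, hk, h1, h2⟩ := ih h0 hPK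
      exact ⟨k, lt_trans hk (Nat.lt_succ_self K), h1, h2⟩

lemma get_not_mem_take {α : Type*} : ∀ (l : List α), l.Nodup → ∀ (j : ℕ) (hj : j < l.length),
    l.get ⟨j, hj⟩ ∉ l.take j := by
  intro l
  induction l with
  | nil => intro _ j hj; simp at hj
  | cons a l ih =>
    intro hnd j hj
    rcases List.nodup_cons.mp hnd with ⟨ha, hl⟩
    cases j with
    | zero => simp
    | succ j =>
      have hj' : j < l.length := by simpa using hj
      intro hmem
      rw [List.take_succ_cons] at hmem
      have hg : (a :: l).get ⟨j+1, hj⟩ = l.get ⟨j, hj'⟩ := rfl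
      rw [hg] at hmem
      rcases List.mem_cons.mp hmem with h | h
      · exact ha (h ▸ List.get_mem l ⟨j, hj'⟩)
      · exact ih hl j hj' h

section Geom

variable {R : Type*} [Ring R] {ι : Type*} [Fintype ι] [DecidableEq ι]
  {S : Type*} [Fintype S] [DecidableEq S] {W : Type*} [Group W]
  (G : GeomSetting R ι S W)

lemma dd_pos (i : ι) : (0:ℝ) < G.FP (G.FD.b i) := lt_of_lt_of_le one_pos (G.FP_basis i)

lemma FP_eq_sum (x : R) : G.FP x = ∑ i, (G.FD.b.repr x i : ℝ) * G.FP (G.FD.b i) := by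
  conv_lhs => rw [← G.FD.b.sum_repr x]
  rw [map_sum]
  refine Finset.sum_congr rfl fun i _ => ?_
  rw [map_zsmul, zsmul_eq_mul]

lemma rcheck_refl (p : ι × S) : G.rcheck p p = 2 := by
  simp [GeomSetting.rcheck]

lemma rcheck_same_s (i j : ι) (s : S) (h : i ≠ j) : G.rcheck (i, s) (j, s) = 0 := by
  simp [GeomSetting.rcheck, h]

lemma rcheck_mixed (j i : ι) {s t : S} (h : s ≠ t) :
    G.rcheck (j, s) (i, t) = G.FD.b.repr (G.FD.b i * G.cartan s t) j := by
  simp [GeomSetting.rcheck, h]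

lemma repr_basis_mul_nonneg {x : R} (hx : G.FD.nonneg x) (j i : ι) :
    0 ≤ G.FD.b.repr (G.FD.b j * x) i := by
  have hexp : G.FD.b j * x = ∑ k, G.FD.b.repr x k • (G.FD.b j * G.FD.b k) := by
    conv_lhs => rw [← G.FD.b.sum_repr x, Finset.mul_sum]
    exact Finset.sum_congr rfl fun k _ => by rw [mul_smul_comm]
  rw [hexp, map_sum, Finset.sum_apply']
  refine Finset.sum_nonneg fun k _ => ?_
  rw [map_zsmul, Finsupp.smul_apply, smul_eq_mul]
  exact mul_nonneg (hx k) (G.FD.c_nonneg j k i)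

lemma rcheck_nonpos {p q : ι × S} (hpq : p ≠ q) : G.rcheck p q ≤ 0 := by
  obtain ⟨i, s⟩ := p; obtain ⟨j, t⟩ := q
  by_cases hst : s = t
  · subst hst
    by_cases hij : i = j
    · exact absurd (by rw [hij]) hpq
    · rw [rcheck_same_s G i j s hij]
  · rw [rcheck_mixed G i j hst]
    have h1 : G.FD.b j * G.cartan s t = -(G.FD.b j * -(G.cartan s t)) := by
      rw [mul_neg, neg_neg]
    rw [h1, map_neg, Finsupp.neg_apply, neg_nonpos]
    exact repr_basis_mul_nonneg G (G.cartan_nonneg s t hst) j i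

lemma rel_one (p q : ι × S) : (G.gen p * G.gen q) ^ G.mcheck p q = 1 := by
  have hmem : (FreeGroup.of p * FreeGroup.of q) ^ G.mcheck p q ∈
      Subgroup.normalClosure G.rels :=
    Subgroup.subset_normalClosure ⟨(p, q), rfl⟩
  have h1 : (PresentedGroup.mk G.rels ((FreeGroup.of p * FreeGroup.of q) ^ G.mcheck p q)
      : G.Wcheck) = 1 :=
    (QuotientGroup.eq_one_iff _).mpr hmem
  have h2 : (G.gen p * G.gen q) ^ G.mcheck p q
      = (PresentedGroup.mk G.rels ((FreeGroup.of p * FreeGroup.of q) ^ G.mcheck p q) : G.Wcheck) := by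
        rw [map_pow, map_mul]; rfl
  exact h2.trans h1

lemma gen_mul_self (p : ι × S) : G.gen p * G.gen p = 1 := by
  have h := rel_one G p p
  have hm : G.mcheck p p = 1 := by simp [GeomSetting.mcheck]
  rwa [hm, pow_one] at h

lemma gen_inv (p : ι × S) : (G.gen p)⁻¹ = G.gen p :=
  inv_eq_of_mul_eq_one_right (gen_mul_self G p)

lemma gen_comm {p q : ι × S} (h : G.mcheck p q = 2) :
    G.gen p * G.gen q = G.gen q * G.gen p := by
  have h2 := rel_one G p q
  rw [h, pow_two] at h2
  have h3 : (G.gen p * G.gen q)⁻¹ = G.gen p * G.gen q := inv_eq_of_mul_eq_one_right h2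
  calc G.gen p * G.gen q = (G.gen p * G.gen q)⁻¹ := h3.symm
    _ = (G.gen q)⁻¹ * (G.gen p)⁻¹ := mul_inv_rev _ _
    _ = G.gen q * G.gen p := by rw [gen_inv, gen_inv]

lemma gen_braid {p q : ι × S} (h : G.mcheck p q = 3) :
    G.gen p * G.gen q * G.gen p = G.gen q * G.gen p * G.gen q := by
  have h3 := rel_one G p q
  rw [h] at h3
  have h4 : (G.gen p * G.gen q * G.gen p) * (G.gen q * G.gen p * G.gen q) = 1 := by
    have : (G.gen p * G.gen q) ^ 3
        = (G.gen p * G.gen q * G.gen p) * (G.gen q * G.gen p * G.gen q) := by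
      rw [pow_succ, pow_succ, pow_one]
      simp only [mul_assoc]
    rw [← this, h3]
  have h5 : G.gen p * G.gen q * G.gen p = (G.gen q * G.gen p * G.gen q)⁻¹ :=
    eq_inv_of_mul_eq_one_left h4
  rw [h5]
  simp only [mul_inv_rev, gen_inv]
  simp only [mul_assoc]

end Geom

section RhoF

variable {R : Type*} [Ring R] {ι : Type*} [Fintype ι] [DecidableEq ι]
  {S : Type*} [Fintype S] [DecidableEq S] {W : Type*} [Group W]
  (G : GeomSetting R ι S W)
  (rhoF : G.Wcheck →* (((ι × S) → ℝ) ≃ₗ[ℝ] ((ι × S) → ℝ)))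
  (hrhoF : ∀ (p : ι × S) (Z : (ι × S) → ℝ) (q : ι × S),
      rhoF (G.gen p) Z q = Z q - (G.rcheck p q : ℝ) * Z p)

/-- The root vector attached to `v` and `p`. -/
def Rt (v : G.Wcheck) (p r : ι × S) : ℝ := rhoF v (Pi.single r 1) p

include hrhoF

lemma Rt_one (p r : ι × S) : Rt G rhoF 1 p r = if p = r then 1 else 0 := by
  rw [Rt, rep_one_app, Pi.single_apply]

lemma Rt_peel (q : ι × S) (v : G.Wcheck) (p r : ι × S) :
    Rt G rhoF (G.gen q * v) p r
      = Rt G rhoF v p r - (G.rcheck q p : ℝ) * Rt G rhoF v q r := by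
  unfold Rt
  rw [rep_mul_app, hrhoF]

lemma rsym_zero {p q : ι × S} (hpq : p ≠ q) (ha : G.rcheck p q = 0) : G.rcheck q p = 0 := by
  have hm : G.mcheck p q = 2 := by simp [GeomSetting.mcheck, hpq, ha]
  have hrel := rel_one G p q
  rw [hm, pow_two] at hrel
  have h4 : ∀ x, rhoF (G.gen p) (rhoF (G.gen q) (rhoF (G.gen p) (rhoF (G.gen q) x))) = x := by
    intro x
    have h := congrArg (fun u => rhoF u x) hrel
    simpa only [rep_mul_app, rep_one_app] using h
  set x₀ : (ι × S) → ℝ := Pi.single q 1 with hx₀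
  have h0p : x₀ p = 0 := Pi.single_eq_of_ne hpq 1
  have h0q : x₀ q = 1 := Pi.single_eq_same q 1
  set b : ℝ := (G.rcheck q p : ℝ) with hb
  have hca : (G.rcheck p q : ℝ) = 0 := by rw [ha]; norm_num
  have hc2 : ∀ r : ι × S, (G.rcheck r r : ℝ) = 2 := fun r => by rw [rcheck_refl]; norm_num
  set y1 := rhoF (G.gen q) x₀ with hy1
  have h1p : y1 p = -b := by rw [hy1, hrhoF, h0p, h0q, ← hb]; ring
  have h1q : y1 q = -1 := by rw [hy1, hrhoF, h0q, hc2]; ring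
  set y2 := rhoF (G.gen p) y1 with hy2
  have h2p : y2 p = b := by rw [hy2, hrhoF, h1p, hc2]; ring
  have h2q : y2 q = -1 := by rw [hy2, hrhoF, h1q, h1p, hca]; ring
  set y3 := rhoF (G.gen q) y2 with hy3
  have h3p : y3 p = 2*b := by rw [hy3, hrhoF, h2p, h2q, ← hb]; ring
  set y4 := rhoF (G.gen p) y3 with hy4
  have h4p : y4 p = -2*b := by rw [hy4, hrhoF, h3p, hc2]; ring
  have hfin : y4 p = 0 := by
    rw [hy4, hy3, hy2, hy1, h4 x₀, h0p]
  rw [h4p] at hfin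
  have : b = 0 := by linarith
  rw [hb] at this
  exact_mod_cast this

lemma rsym_negone {p q : ι × S} (hpq : p ≠ q) (ha : G.rcheck p q = -1) :
    G.rcheck q p = -1 := by
  have hm : G.mcheck p q = 3 := by simp [GeomSetting.mcheck, hpq, ha]
  have hrel := rel_one G p q
  rw [hm] at hrel
  have hrel' : (G.gen p * G.gen q) * ((G.gen p * G.gen q) * (G.gen p * G.gen q)) = 1 := by
    rw [← hrel, pow_succ, pow_two]
    group
  have h6 : ∀ x, rhoF (G.gen p) (rhoF (G.gen q) (rhoF (G.gen p) (rhoF (G.gen q)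
      (rhoF (G.gen p) (rhoF (G.gen q) x))))) = x := by
    intro x
    have h := congrArg (fun u => rhoF u x) hrel'
    simpa only [rep_mul_app, rep_one_app] using h
  set x₀ : (ι × S) → ℝ := Pi.single q 1 with hx₀
  have h0p : x₀ p = 0 := Pi.single_eq_of_ne hpq 1
  have h0q : x₀ q = 1 := Pi.single_eq_same q 1
  set b : ℝ := (G.rcheck q p : ℝ) with hb
  have hca : (G.rcheck p q : ℝ) = -1 := by rw [ha]; norm_num
  have hc2 : ∀ r : ι × S, (G.rcheck r r : ℝ) = 2 := fun r => by rw [rcheck_refl]; norm_num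
  set y1 := rhoF (G.gen q) x₀ with hy1
  have h1p : y1 p = -b := by rw [hy1, hrhoF, h0p, h0q, ← hb]; ring
  have h1q : y1 q = -1 := by rw [hy1, hrhoF, h0q, hc2]; ring
  set y2 := rhoF (G.gen p) y1 with hy2
  have h2p : y2 p = b := by rw [hy2, hrhoF, h1p, hc2]; ring
  have h2q : y2 q = -1 - b := by rw [hy2, hrhoF, h1q, h1p, hca]; ring
  set y3 := rhoF (G.gen q) y2 with hy3
  have h3p : y3 p = 2*b + b^2 := by rw [hy3, hrhoF, h2p, h2q, ← hb]; ring
  have h3q : y3 q = 1 + b := by rw [hy3, hrhoF, h2q, hc2]; ring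
  set y4 := rhoF (G.gen p) y3 with hy4
  have h4p : y4 p = -(2*b + b^2) := by rw [hy4, hrhoF, h3p, hc2]; ring
  have h4q : y4 q = 1 + 3*b + b^2 := by rw [hy4, hrhoF, h3q, h3p, hca]; ring
  set y5 := rhoF (G.gen q) y4 with hy5
  have h5p : y5 p = -3*b - 4*b^2 - b^3 := by rw [hy5, hrhoF, h4p, h4q, ← hb]; ring
  have h5q : y5 q = -(1 + 3*b + b^2) := by rw [hy5, hrhoF, h4q, hc2]; ring
  set y6 := rhoF (G.gen p) y5 with hy6
  have h6p : y6 p = 3*b + 4*b^2 + b^3 := by rw [hy6, hrhoF, h5p, hc2]; ring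
  have h6q : y6 q = -1 - 6*b - 5*b^2 - b^3 := by rw [hy6, hrhoF, h5q, h5p, hca]; ring
  have hfin : y6 = x₀ := by
    rw [hy6, hy5, hy4, hy3, hy2, hy1]; exact h6 x₀
  have e1r : 3*b + 4*b^2 + b^3 = 0 := by rw [← h6p, hfin, h0p]
  have e2r : -1 - 6*b - 5*b^2 - b^3 = 1 := by rw [← h6q, hfin, h0q]
  set bz : ℤ := G.rcheck q p with hbz
  have hbzb : (bz : ℝ) = b := by rw [hbz, hb]
  have e1 : 3*bz + 4*bz^2 + bz^3 = 0 := by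
    have : ((3*bz + 4*bz^2 + bz^3 : ℤ) : ℝ) = 0 := by push_cast; rw [hbzb]; linarith
    exact_mod_cast this
  have e2 : bz^3 + 5*bz^2 + 6*bz + 2 = 0 := by
    have : ((bz^3 + 5*bz^2 + 6*bz + 2 : ℤ) : ℝ) = 0 := by push_cast; rw [hbzb]; linarith
    exact_mod_cast this
  have e3 : (bz + 1) * (bz + 2) = 0 := by
    have hr : (bz + 1) * (bz + 2) = (bz^3 + 5*bz^2 + 6*bz + 2) - (3*bz + 4*bz^2 + bz^3) := by ring
    rw [hr, e1, e2]; norm_num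
  rcases mul_eq_zero.mp e3 with h | h
  · have : bz = -1 := by omega
    rw [hbz] at this; exact this
  · exfalso
    have hbz2 : bz = -2 := by omega
    rw [hbz2] at e1; norm_num at e1

end RhoF

section Positivity

variable {R : Type*} [Ring R] {ι : Type*} [Fintype ι] [DecidableEq ι]
  {S : Type*} [Fintype S] [DecidableEq S] {W : Type*} [Group W]
  (G : GeomSetting R ι S W)
  (rhoF : G.Wcheck →* (((ι × S) → ℝ) ≃ₗ[ℝ] ((ι × S) → ℝ)))
  (hrhoF : ∀ (p : ι × S) (Z : (ι × S) → ℝ) (q : ι × S),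
      rhoF (G.gen p) Z q = Z q - (G.rcheck p q : ℝ) * Z p)
  {M : CoxeterMatrix (ι × S)} (cs : CoxeterSystem M G.Wcheck)
  (hgen : ∀ p, cs.simple p = G.gen p)

include hrhoF hgen

lemma lsm (u : G.Wcheck) (x : ι × S) :
    cs.length (G.gen x * u) = cs.length u + 1 ∨
      cs.length (G.gen x * u) + 1 = cs.length u := by
  rw [← hgen x]; exact cs.length_simple_mul u x

lemma leminf (N : ℕ)
    (IH : ∀ (u : G.Wcheck) (p' : ι × S), cs.length u < N →
      cs.length (G.gen p' * u) = cs.length u + 1 → ∀ r, 0 ≤ Rt G rhoF u p' r) :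
    ∀ n (v : G.Wcheck), cs.length v = n → cs.length v < N →
      ∀ x y : ι × S, x ≠ y → G.rcheck x y ≤ -2 → G.rcheck y x ≤ -2 →
      cs.length (G.gen x * v) = cs.length v + 1 →
      ∀ c d : ℝ, 0 ≤ d → d ≤ c →
      ∀ r, 0 ≤ c * Rt G rhoF v x r + d * Rt G rhoF v y r := by
  intro n
  induction n using Nat.strong_induction_on with
  | _ n IH2 =>
  intro v hn hN x y hxy hxy2 hyx2 hasc c d hd hdc r
  have hc : 0 ≤ c := le_trans hd hdc
  rcases lsm G rhoF hrhoF cs hgen v y with hascy | hdescy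
  · have h1 := IH v x hN hasc r
    have h2 := IH v y hN hascy r
    exact add_nonneg (mul_nonneg hc h1) (mul_nonneg hd h2)
  · set v'' := G.gen y * v with hv''def
    have hvv'' : G.gen y * v'' = v := by
      rw [hv''def, ← mul_assoc, gen_mul_self, one_mul]
    have hlen'' : cs.length v'' + 1 = cs.length v := hdescy
    have hascy'' : cs.length (G.gen y * v'') = cs.length v'' + 1 := by
      rw [hvv'']; omega
    have hb : (G.rcheck y x : ℝ) ≤ -2 := by exact_mod_cast hyx2
    have e1 : Rt G rhoF v x r
        = Rt G rhoF v'' x r - (G.rcheck y x : ℝ) * Rt G rhoF v'' y r := by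
      rw [← hvv'', Rt_peel G rhoF hrhoF]
    have e2 : Rt G rhoF v y r = - Rt G rhoF v'' y r := by
      rw [← hvv'', Rt_peel G rhoF hrhoF, rcheck_refl]; push_cast; ring
    have hrec := IH2 (cs.length v'') (by omega) v'' rfl (by omega) y x hxy.symm hyx2 hxy2
        hascy'' (-c * (G.rcheck y x : ℝ) - d) c hc (by nlinarith) r
    have hre : c * Rt G rhoF v x r + d * Rt G rhoF v y r
        = (-c * (G.rcheck y x : ℝ) - d) * Rt G rhoF v'' y r + c * Rt G rhoF v'' x r := by
      rw [e1, e2]; ring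
    rw [hre]
    exact hrec

lemma mainpos :
    ∀ n (v : G.Wcheck) (p : ι × S), cs.length v = n →
      cs.length (G.gen p * v) = cs.length v + 1 → ∀ r, 0 ≤ Rt G rhoF v p r := by
  intro n
  induction n using Nat.strong_induction_on with
  | _ n IH =>
  intro v p hn hasc r
  by_cases hv1 : v = 1
  · subst hv1
    rw [Rt_one G rhoF hrhoF]
    split <;> norm_num
  · obtain ⟨q, hqdesc⟩ := cs.exists_leftDescent_of_ne_one hv1
    have hdesc : cs.length (G.gen q * v) + 1 = cs.length v := by
      rw [← hgen q]; exact cs.isLeftDescent_iff.mp hqdesc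
    have hpq : p ≠ q := by
      intro h; rw [h] at hasc; omega
    set v' := G.gen q * v with hv'def
    have hvv' : G.gen q * v' = v := by
      rw [hv'def, ← mul_assoc, gen_mul_self, one_mul]
    have hlen' : cs.length v' + 1 = n := by rw [← hn]; exact hdesc
    have hascq' : cs.length (G.gen q * v') = cs.length v' + 1 := by rw [hvv']; omega
    -- expansion of Rt v p r
    have hexp : Rt G rhoF v p r
        = Rt G rhoF v' p r - (G.rcheck q p : ℝ) * Rt G rhoF v' q r := by
      rw [← hvv', Rt_peel G rhoF hrhoF]
    by_cases ha0 : G.rcheck p q = 0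
    · -- commuting case
      have hb0 : G.rcheck q p = 0 := rsym_zero G rhoF hrhoF hpq ha0
      rcases lsm G rhoF hrhoF cs hgen v' p with hascp' | hdescp'
      · have h1 := IH (cs.length v') (by omega) v' p rfl hascp' r
        rw [hexp, hb0]
        push_cast
        linarith
      · exfalso
        set v'' := G.gen p * v' with hv''def
        have hvv'' : G.gen p * v'' = v' := by
          rw [hv''def, ← mul_assoc, gen_mul_self, one_mul]
        have hcomm : G.gen p * G.gen q = G.gen q * G.gen p :=
          gen_comm G (by simp [GeomSetting.mcheck, hpq, ha0])
        have hrwv : G.gen p * v = G.gen q * v'' := by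
          rw [← hvv', ← hvv'']
          calc G.gen p * (G.gen q * (G.gen p * v''))
              = (G.gen p * G.gen q) * G.gen p * v'' := by simp only [mul_assoc]
            _ = (G.gen q * G.gen p) * G.gen p * v'' := by rw [hcomm]
            _ = G.gen q * (G.gen p * G.gen p) * v'' := by simp only [mul_assoc]
            _ = G.gen q * v'' := by rw [gen_mul_self, mul_one]
        have hle : cs.length (G.gen q * v'') ≤ cs.length v'' + 1 := by
          rcases lsm G rhoF hrhoF cs hgen v'' q with h | h <;> omega
        rw [hrwv] at hasc
        omega
    · by_cases ha1 : G.rcheck p q = -1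
      · -- braid case
        have hb1 : G.rcheck q p = -1 := rsym_negone G rhoF hrhoF hpq ha1
        rcases lsm G rhoF hrhoF cs hgen v' p with hascp' | hdescp'
        · have h1 := IH (cs.length v') (by omega) v' p rfl hascp' r
          have h2 := IH (cs.length v') (by omega) v' q rfl hascq' r
          rw [hexp, hb1]
          push_cast
          linarith
        · set v'' := G.gen p * v' with hv''def
          have hvv'' : G.gen p * v'' = v' := by
            rw [hv''def, ← mul_assoc, gen_mul_self, one_mul]
          have hlen'' : cs.length v'' + 1 = cs.length v' := hdescp'
          have hascp'' : cs.length (G.gen p * v'') = cs.length v'' + 1 := by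
            rw [hvv'']; omega
          rcases lsm G rhoF hrhoF cs hgen v'' q with hascq'' | hdescq''
          · have h1 := IH (cs.length v'') (by omega) v'' q rfl hascq'' r
            have e1 : Rt G rhoF v' p r
                = Rt G rhoF v'' p r - (G.rcheck p p : ℝ) * Rt G rhoF v'' p r := by
              rw [← hvv'', Rt_peel G rhoF hrhoF]
            have e2 : Rt G rhoF v' q r
                = Rt G rhoF v'' q r - (G.rcheck p q : ℝ) * Rt G rhoF v'' p r := by
              rw [← hvv'', Rt_peel G rhoF hrhoF]
            rw [hexp, e1, e2, hb1, ha1, rcheck_refl]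
            push_cast
            linarith
          · exfalso
            set v''' := G.gen q * v'' with hv'''def
            have hvv''' : G.gen q * v''' = v'' := by
              rw [hv'''def, ← mul_assoc, gen_mul_self, one_mul]
            have hbraid : G.gen p * G.gen q * G.gen p = G.gen q * G.gen p * G.gen q :=
              gen_braid G (by simp [GeomSetting.mcheck, hpq, ha0, ha1])
            have hrwv : G.gen p * v = G.gen q * (G.gen p * v''') := by
              rw [← hvv', ← hvv'', ← hvv''']
              calc G.gen p * (G.gen q * (G.gen p * (G.gen q * v''')))
                  = (G.gen p * G.gen q * G.gen p) * G.gen q * v''' := by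
                    simp only [mul_assoc]
                _ = (G.gen q * G.gen p * G.gen q) * G.gen q * v''' := by rw [hbraid]
                _ = G.gen q * G.gen p * (G.gen q * G.gen q) * v''' := by
                    simp only [mul_assoc]
                _ = G.gen q * (G.gen p * v''') := by
                    rw [gen_mul_self, mul_one]; simp only [mul_assoc]
            have hle1 : cs.length (G.gen p * v''') ≤ cs.length v''' + 1 := by
              rcases lsm G rhoF hrhoF cs hgen v''' p with h | h <;> omega
            have hle2 : cs.length (G.gen q * (G.gen p * v''')) ≤
                cs.length (G.gen p * v''') + 1 := by
              rcases lsm G rhoF hrhoF cs hgen (G.gen p * v''') q with h | h <;> omega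
            rw [hrwv] at hasc
            omega
      · -- infinite case
        have ha2 : G.rcheck p q ≤ -2 := by
          have := rcheck_nonpos G hpq
          omega
        have hb2 : G.rcheck q p ≤ -2 := by
          have h0 := rcheck_nonpos G (Ne.symm hpq)
          have hne0 : G.rcheck q p ≠ 0 := fun h => ha0 (rsym_zero G rhoF hrhoF (Ne.symm hpq) h)
          have hne1 : G.rcheck q p ≠ -1 := fun h => ha1 (rsym_negone G rhoF hrhoF (Ne.symm hpq) h)
          omega
        have hbR : (G.rcheck q p : ℝ) ≤ -2 := by exact_mod_cast hb2
        have hres := leminf G rhoF hrhoF cs hgen n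
            (fun u p' hu hascu r' => IH (cs.length u) (by omega) u p' rfl hascu r')
            (cs.length v') v' rfl (by omega) q p (Ne.symm hpq) hb2 ha2 hascq'
            (-(G.rcheck q p : ℝ)) 1 (by norm_num) (by linarith) r
        rw [hexp]
        nlinarith [hres]

end Positivity

section Sign

variable {R : Type*} [Ring R] {ι : Type*} [Fintype ι] [DecidableEq ι]
  {S : Type*} [Fintype S] [DecidableEq S] {W : Type*} [Group W]
  (G : GeomSetting R ι S W)
  (rhoF : G.Wcheck →* (((ι × S) → ℝ) ≃ₗ[ℝ] ((ι × S) → ℝ)))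
  (hrhoF : ∀ (p : ι × S) (Z : (ι × S) → ℝ) (q : ι × S),
      rhoF (G.gen p) Z q = Z q - (G.rcheck p q : ℝ) * Z p)

include hrhoF

lemma mcheck_symm (p q : ι × S) : G.mcheck p q = G.mcheck q p := by
  by_cases hpq : p = q
  · rw [hpq]
  · have hqp : q ≠ p := Ne.symm hpq
    by_cases h0 : G.rcheck p q = 0
    · have h0' : G.rcheck q p = 0 := rsym_zero G rhoF hrhoF hpq h0
      simp [GeomSetting.mcheck, hpq, hqp, h0, h0']
    · by_cases h1 : G.rcheck p q = -1
      · have h1' : G.rcheck q p = -1 := rsym_negone G rhoF hrhoF hpq h1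
        simp [GeomSetting.mcheck, hpq, hqp, h0, h1, h1']
      · have h0' : G.rcheck q p ≠ 0 := fun h => h0 (rsym_zero G rhoF hrhoF hqp h)
        have h1' : G.rcheck q p ≠ -1 := fun h => h1 (rsym_negone G rhoF hrhoF hqp h)
        simp [GeomSetting.mcheck, hpq, hqp, h0, h1, h0', h1']

/-- The unfolded Coxeter matrix as a `CoxeterMatrix`. -/
def Mcox : CoxeterMatrix (ι × S) where
  M := G.mcheck
  isSymm := Matrix.ext fun p q => by
    show G.mcheck q p = G.mcheck p q; exact mcheck_symm G rhoF hrhoF q p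
  diagonal p := by simp [GeomSetting.mcheck]
  off_diagonal p q h := by
    unfold GeomSetting.mcheck
    rw [if_neg h]
    split_ifs <;> norm_num

/-- The Coxeter system structure on the unfolded group. -/
def csW : CoxeterSystem (Mcox G rhoF hrhoF) G.Wcheck := ⟨MulEquiv.refl _⟩

lemma csW_simple (p : ι × S) : (csW G rhoF hrhoF).simple p = G.gen p := rfl

lemma Rt_sign (v : G.Wcheck) (p : ι × S) :
    (∀ r, 0 ≤ Rt G rhoF v p r) ∨ (∀ r, Rt G rhoF v p r ≤ 0) := by
  set cs := csW G rhoF hrhoF with hcs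
  have hgen : ∀ q, cs.simple q = G.gen q := csW_simple G rhoF hrhoF
  rcases lsm G rhoF hrhoF cs hgen v p with hasc | hdesc
  · left
    exact mainpos G rhoF hrhoF cs hgen (cs.length v) v p rfl hasc
  · right
    set v' := G.gen p * v with hv'def
    have hvv' : G.gen p * v' = v := by
      rw [hv'def, ← mul_assoc, gen_mul_self, one_mul]
    have hasc' : cs.length (G.gen p * v') = cs.length v' + 1 := by rw [hvv']; omega
    have h := mainpos G rhoF hrhoF cs hgen (cs.length v') v' p rfl hasc'
    intro r
    have e : Rt G rhoF v p r = - Rt G rhoF v' p r := by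
      rw [← hvv', Rt_peel G rhoF hrhoF, rcheck_refl]; push_cast; ring
    rw [e]
    linarith [h r]

end Sign

section Emb

variable {R : Type*} [Ring R] {ι : Type*} [Fintype ι] [DecidableEq ι]
  {S : Type*} [Fintype S] [DecidableEq S] {W : Type*} [Group W]
  (G : GeomSetting R ι S W)
  (rhoF : G.Wcheck →* (((ι × S) → ℝ) ≃ₗ[ℝ] ((ι × S) → ℝ)))
  (hrhoF : ∀ (p : ι × S) (Z : (ι × S) → ℝ) (q : ι × S),
      rhoF (G.gen p) Z q = Z q - (G.rcheck p q : ℝ) * Z p)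

/-- The block element `∏_j gen (j, s)`. -/
def blk (s : S) : G.Wcheck :=
  ((Finset.univ.toList (α := ι)).map fun j => G.gen (j, s)).prod

/-- The lifted word product. -/
def pw (ω : List S) : G.Wcheck := (ω.map (blk G)).prod

lemma pw_nil : pw G ([] : List S) = 1 := by simp [pw]

lemma pw_cons (s : S) (ω : List S) : pw G (s :: ω) = blk G s * pw G ω := by
  simp [pw]

lemma pw_append (ω ω' : List S) : pw G (ω ++ ω') = pw G ω * pw G ω' := by
  simp [pw]

include hrhoF

lemma list_action (s : S) : ∀ (L : List ι), L.Nodup → ∀ (x : (ι × S) → ℝ) (q : ι × S),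
    rhoF ((L.map fun j => G.gen (j, s)).prod) x q
      = x q - ((L.map fun j => (G.rcheck (j, s) q : ℝ) * x (j, s)).sum) := by
  intro L
  induction L with
  | nil => intro _ x q; simp [rep_one_app]
  | cons j0 L ih =>
    intro hnd x q
    rcases List.nodup_cons.mp hnd with ⟨hj0, hL⟩
    rw [List.map_cons, List.prod_cons, rep_mul_app, hrhoF, ih hL x q, ih hL x (j0, s)]
    have hz : (L.map fun j => (G.rcheck (j, s) (j0, s) : ℝ) * x (j, s)).sum = 0 := by
      apply List.sum_eq_zero
      intro z hz
      obtain ⟨j, hjL, rfl⟩ := List.mem_map.mp hz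
      have hne : j ≠ j0 := fun h => hj0 (h ▸ hjL)
      rw [rcheck_same_s G j j0 s hne]
      norm_num
    rw [hz, List.map_cons, List.sum_cons]
    ring

lemma coord_invariant (t : S) (c : ι) :
    ∀ (L : List ι), c ∉ L → ∀ (x : (ι × S) → ℝ),
    rhoF ((L.map fun j => G.gen (j, t)).prod) x (c, t) = x (c, t) := by
  intro L
  induction L with
  | nil => intro _ x; simp [rep_one_app]
  | cons j0 L ih =>
    intro hc x
    have hc0 : c ∉ L := fun h => hc (List.mem_cons_of_mem _ h)
    have hne : j0 ≠ c := fun h => hc (h ▸ List.mem_cons_self)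
    rw [List.map_cons, List.prod_cons, rep_mul_app, hrhoF, ih hc0 x,
      rcheck_same_s G j0 c t hne]
    norm_num

lemma wall_move (t : S) (c : ι) (L : List ι) (hc : c ∉ L) :
    rhoF ((L.map fun j => G.gen (j, t)).prod) '' wallH (ι × S) (c, t)
      = wallH (ι × S) (c, t) := by
  set u := (L.map fun j => G.gen (j, t)).prod with hu
  ext x
  constructor
  · rintro ⟨y, hy, rfl⟩
    show rhoF u y (c, t) = 0
    rw [coord_invariant G rhoF hrhoF t c L hc]
    exact hy
  · intro hx
    refine ⟨rhoF u⁻¹ x, ?_, rep_inv_app rhoF u x⟩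
    show rhoF u⁻¹ x (c, t) = 0
    have := coord_invariant G rhoF hrhoF t c L hc (rhoF u⁻¹ x)
    rw [rep_inv_app rhoF u x] at this
    rw [← this]
    exact hx

omit hrhoF in
lemma FP_cartan_diag (s : S) : G.FP (G.cartan s s) = 2 := by
  have h : G.cartan s s = 2 := G.cartan_diag s
  rw [h, map_ofNat]

lemma blk_emb (s : S) (Z : S → ℝ) :
    rhoF (blk G s) (G.emb Z) = G.emb (fun t => Z t - G.FP (G.cartan s t) * Z s) := by
  funext q
  obtain ⟨i, t⟩ := q
  rw [blk, list_action G rhoF hrhoF s _ (Finset.univ.nodup_toList)]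
  have hconv : ((Finset.univ.toList (α := ι)).map
      fun j => (G.rcheck (j, s) (i, t) : ℝ) * (G.emb Z) (j, s)).sum
      = ∑ j, (G.rcheck (j, s) (i, t) : ℝ) * (G.FP (G.FD.b j) * Z s) := by
    rw [Finset.sum_map_toList]
    rfl
  rw [hconv]
  by_cases hts : t = s
  · subst hts
    have hsum : ∑ j, (G.rcheck (j, t) (i, t) : ℝ) * (G.FP (G.FD.b j) * Z t)
        = 2 * (G.FP (G.FD.b i) * Z t) := by
      rw [Finset.sum_eq_single i]
      · rw [rcheck_refl]; push_cast; ring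
      · intro j _ hji
        rw [rcheck_same_s G j i t hji]; norm_num
      · intro h; exact absurd (Finset.mem_univ i) h
    rw [hsum]
    show G.emb Z (i, t) - _ = G.emb (fun u => Z u - G.FP (G.cartan t u) * Z t) (i, t)
    simp only [GeomSetting.emb]
    rw [FP_cartan_diag G]
    ring
  · have hst : s ≠ t := fun h => hts h.symm
    have hsum : ∑ j, (G.rcheck (j, s) (i, t) : ℝ) * (G.FP (G.FD.b j) * Z s)
        = G.FP (G.FD.b i) * G.FP (G.cartan s t) * Z s := by
      have h1 : ∀ j, (G.rcheck (j, s) (i, t) : ℝ) * (G.FP (G.FD.b j) * Z s)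
          = ((G.FD.b.repr (G.FD.b i * G.cartan s t) j : ℝ) * G.FP (G.FD.b j)) * Z s := by
        intro j
        rw [rcheck_mixed G j i hst]
        ring
      rw [Finset.sum_congr rfl fun j _ => h1 j, ← Finset.sum_mul, ← FP_eq_sum, map_mul]
    rw [hsum]
    show G.emb Z (i, t) - _ = G.emb (fun u => Z u - G.FP (G.cartan s u) * Z s) (i, t)
    simp only [GeomSetting.emb]
    ring

variable (rhoE : W →* ((S → ℝ) ≃ₗ[ℝ] (S → ℝ)))
  (hrhoE : ∀ (s : S) (Z : S → ℝ) (t : S),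
      rhoE (G.cs.simple s) Z t = Z t - G.FP (G.cartan s t) * Z s)

include hrhoE

lemma pw_emb (ω : List S) (Z : S → ℝ) :
    rhoF (pw G ω) (G.emb Z) = G.emb (rhoE (G.cs.wordProd ω) Z) := by
  induction ω generalizing Z with
  | nil =>
    rw [pw_nil, CoxeterSystem.wordProd_nil, rep_one_app, rep_one_app]
  | cons s ω ih =>
    rw [pw_cons, CoxeterSystem.wordProd_cons, rep_mul_app, rep_mul_app, ih,
      blk_emb G rhoF hrhoF]
    have harg : (fun t => rhoE (G.cs.wordProd ω) Z t
          - G.FP (G.cartan s t) * rhoE (G.cs.wordProd ω) Z s)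
        = rhoE (G.cs.simple s) (rhoE (G.cs.wordProd ω) Z) := by
      funext t
      rw [hrhoE]
    rw [harg]

lemma emb_preimage (ω : List S) (A : Set ((ι × S) → ℝ)) :
    G.emb ⁻¹' (rhoF (pw G ω) '' A)
      = rhoE (G.cs.wordProd ω) '' (G.emb ⁻¹' A) := by
  set w := G.cs.wordProd ω with hw
  ext Z
  simp only [Set.mem_preimage, Set.mem_image]
  constructor
  · rintro ⟨y, hyA, hy⟩
    refine ⟨rhoE w⁻¹ Z, ?_, rep_inv_app rhoE w Z⟩
    have h1 : rhoF (pw G ω) (G.emb (rhoE w⁻¹ Z)) = G.emb Z := by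
      rw [pw_emb G rhoF hrhoF rhoE hrhoE, ← hw, rep_inv_app rhoE w Z]
    have h2 : rhoF (pw G ω) y = rhoF (pw G ω) (G.emb (rhoE w⁻¹ Z)) := by
      rw [h1, hy]
    have h3 : y = G.emb (rhoE w⁻¹ Z) := (rhoF (pw G ω)).injective h2
    show G.emb (rhoE w⁻¹ Z) ∈ A
    rw [← h3]
    exact hyA
  · rintro ⟨Z₁, hZ₁, rfl⟩
    exact ⟨G.emb Z₁, hZ₁, (pw_emb G rhoF hrhoF rhoE hrhoE ω Z₁).symm ▸ rfl⟩

omit hrhoF hrhoE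

lemma emb_preimage_wall (c : ι) (t : S) :
    G.emb ⁻¹' (wallH (ι × S) (c, t)) = wallH S t := by
  ext Z
  simp only [Set.mem_preimage, wallH, Set.mem_setOf_eq, GeomSetting.emb]
  constructor
  · intro h
    rcases mul_eq_zero.mp h with h | h
    · exact absurd h (ne_of_gt (dd_pos G c))
    · exact h
  · intro h
    rw [h, mul_zero]

end Emb

section Topo

variable {R : Type*} [Ring R] {ι : Type*} [Fintype ι] [DecidableEq ι]
  {S : Type*} [Fintype S] [DecidableEq S] {W : Type*} [Group W]
  (G : GeomSetting R ι S W)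
  (rhoE : W →* ((S → ℝ) ≃ₗ[ℝ] (S → ℝ)))
  (hrhoE : ∀ (s : S) (Z : S → ℝ) (t : S),
      rhoE (G.cs.simple s) Z t = Z t - G.FP (G.cartan s t) * Z s)

lemma titsT_image (w : W) : (fun Z => rhoE w Z) '' titsT rhoE = titsT rhoE := by
  ext x
  simp only [titsT, Set.mem_iUnion, Set.mem_image]
  constructor
  · rintro ⟨y, ⟨g, z, hz, rfl⟩, rfl⟩
    exact ⟨w * g, z, hz, rep_mul_app rhoE w g z⟩
  · rintro ⟨g, z, hz, rfl⟩
    refine ⟨rhoE (w⁻¹ * g) z, ⟨w⁻¹ * g, z, hz, rfl⟩, ?_⟩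
    rw [← rep_mul_app, mul_inv_cancel_left]

lemma interior_titsT_image (w : W) :
    (fun Z => rhoE w Z) '' interior (titsT rhoE) = interior (titsT rhoE) := by
  have hhom : (fun Z => rhoE w Z) '' interior (titsT rhoE)
      = interior ((fun Z => rhoE w Z) '' titsT rhoE) := by
    have he : (fun Z => rhoE w Z)
        = ⇑((rhoE w).toContinuousLinearEquiv.toHomeomorph) := by
      funext Z; rfl
    rw [he]
    exact ((rhoE w).toContinuousLinearEquiv.toHomeomorph.image_interior _)
  rw [hhom, titsT_image]

lemma coneC_mem_titsT (Z : S → ℝ) (h : Z ∈ coneC S) : Z ∈ titsT rhoE := by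
  refine Set.mem_iUnion.mpr ⟨1, Z, h, ?_⟩
  rw [map_one]; rfl

include hrhoE

lemma wallpoint_interior [Nonempty S] (s : S) :
    (fun t => if t = s then (0:ℝ) else 1) ∈ interior (titsT rhoE) := by
  classical
  set Z₀ : S → ℝ := fun t => if t = s then (0:ℝ) else 1 with hZ₀
  set Mx : ℝ := Finset.univ.sup' Finset.univ_nonempty
    (fun t : S => |G.FP (G.cartan s t)|) with hMx
  have hMx0 : 0 ≤ Mx := by
    rw [hMx]
    exact le_trans (abs_nonneg _)
      (Finset.le_sup' (fun t : S => |G.FP (G.cartan s t)|) (Finset.mem_univ s))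
  set ε : ℝ := min (1/2 : ℝ) (1 / (2 * (Mx + 1))) with hε
  have hε0 : 0 < ε := lt_min (by norm_num) (by positivity)
  have hε1 : ε ≤ 1/2 := min_le_left _ _
  have hε2 : ε ≤ 1 / (2 * (Mx + 1)) := min_le_right _ _
  rw [mem_interior_iff_mem_nhds, Metric.mem_nhds_iff]
  refine ⟨ε, hε0, fun Z' hZ' => ?_⟩
  rw [Metric.mem_ball] at hZ'
  have hco : ∀ t, |Z' t - Z₀ t| < ε := by
    intro t
    have h1 := lt_of_le_of_lt (dist_le_pi_dist Z' Z₀ t) hZ'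
    rwa [Real.dist_eq] at h1
  have hcos : |Z' s| < ε := by
    have h := hco s
    rw [hZ₀] at h
    simpa using h
  have hcot : ∀ t, t ≠ s → |Z' t - 1| < ε := by
    intro t ht
    have h := hco t
    rw [hZ₀] at h
    simpa [ht] using h
  have hMxe : Mx * ε ≤ 1/2 := by
    have h1 : Mx * ε ≤ Mx * (1 / (2 * (Mx + 1))) :=
      mul_le_mul_of_nonneg_left hε2 hMx0
    have h2 : Mx * (1 / (2 * (Mx + 1))) ≤ 1/2 := by
      rw [mul_one_div, div_le_div_iff₀ (by positivity) (by norm_num)]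
      linarith
    linarith
  by_cases hsgn : 0 ≤ Z' s
  · refine coneC_mem_titsT rhoE Z' (fun t => ?_)
    by_cases hts : t = s
    · rw [hts]; exact hsgn
    · have h := abs_lt.mp (hcot t hts)
      linarith [h.1]
  · push_neg at hsgn
    set Y := rhoE (G.cs.simple s) Z' with hY
    have hYc : Y ∈ coneC S := by
      intro t
      rw [hY, hrhoE]
      by_cases hts : t = s
      · rw [hts, FP_cartan_diag G]
        linarith
      · have hbd : |G.FP (G.cartan s t)| ≤ Mx := by
          rw [hMx]
          exact Finset.le_sup' (fun u : S => |G.FP (G.cartan s u)|) (Finset.mem_univ t)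
      --  |cartan * Z' s| ≤ Mx * ε
        have hkey : |G.FP (G.cartan s t) * Z' s| ≤ Mx * ε := by
          rw [abs_mul]
          exact mul_le_mul hbd (le_of_lt hcos) (abs_nonneg _) hMx0
        have h1 := abs_le.mp hkey
        have h2 := abs_lt.mp (hcot t hts)
        linarith [h1.2, h2.1]
    have hZY : rhoE (G.cs.simple s) Y = Z' := by
      rw [hY, ← rep_mul_app, G.cs.simple_mul_simple_self, rep_one_app]
    exact Set.mem_iUnion.mpr ⟨G.cs.simple s, Y, hYc, hZY⟩

omit hrhoE

lemma chamber_dense [Nonempty S] {U : Set (S → ℝ)} (hU : IsOpen U)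
    (hne : (U ∩ titsT rhoE).Nonempty) :
    ∃ (ω : List S) (Y : S → ℝ), (∀ t, 0 < Y t) ∧ rhoE (G.cs.wordProd ω) Y ∈ U := by
  obtain ⟨Z₁, hZU, hZT⟩ := hne
  obtain ⟨w, y, hy, hwy⟩ : ∃ w y, y ∈ coneC S ∧ rhoE w y = Z₁ := by
    rcases Set.mem_iUnion.mp hZT with ⟨w, y, hy, h⟩
    exact ⟨w, y, hy, h⟩
  obtain ⟨ω, hω⟩ := G.cs.wordProd_surjective w
  have hcont : Continuous fun Y : S → ℝ => rhoE w Y :=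
    LinearMap.continuous_of_finiteDimensional ((rhoE w : (S → ℝ) →ₗ[ℝ] (S → ℝ)))
  have hopen : IsOpen ((fun Y : S → ℝ => rhoE w Y) ⁻¹' U) := hU.preimage hcont
  have hymem : y ∈ (fun Y : S → ℝ => rhoE w Y) ⁻¹' U := by
    rw [Set.mem_preimage, hwy]; exact hZU
  obtain ⟨ε, hε0, hball⟩ := Metric.isOpen_iff.mp hopen y hymem
  set Y := y + (fun _ : S => ε/2) with hYdef
  have hYball : Y ∈ Metric.ball y ε := by
    rw [Metric.mem_ball]
    rw [show dist Y y = dist Y y from rfl]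
    have : ∀ t, dist (Y t) (y t) < ε := by
      intro t
      rw [hYdef]
      simp only [Pi.add_apply, Real.dist_eq]
      rw [add_sub_cancel_left]
      rw [abs_of_pos (by positivity)]
      linarith
    exact (dist_pi_lt_iff hε0).mpr this
  refine ⟨ω, Y, fun t => ?_, ?_⟩
  · rw [hYdef]
    have := hy t
    simp only [Pi.add_apply]
    positivity
  · rw [hω]
    exact hball hYball

end Topo

end HypAux


/-- **Theorem 4.18.** The hyperplane system `A` is obtained from `Ǎ` by intersecting with
`Hom_R(RΛ_S, ℝ)` those hyperplanes of `Ǎ` that meet the Tits cone `T°`. -/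
theorem hyperplane_system_identification (G : GeomSetting R ι S W)
    (rhoE : W →* ((S → ℝ) ≃ₗ[ℝ] (S → ℝ)))
    (hrhoE : ∀ (s : S) (Z : S → ℝ) (t : S),
      rhoE (G.cs.simple s) Z t = Z t - G.FP (G.cartan s t) * Z s)
    (rhoF : G.Wcheck →* (((ι × S) → ℝ) ≃ₗ[ℝ] ((ι × S) → ℝ)))
    (hrhoF : ∀ (p : ι × S) (Z : (ι × S) → ℝ) (q : ι × S),
      rhoF (G.gen p) Z q = Z q - (G.rcheck p q : ℝ) * Z p) :
    hypSys rhoE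
      = {H | ∃ Hc ∈ hypSys rhoF,
          (Hc ∩ (G.emb '' interior (titsT rhoE))).Nonempty ∧ H = G.emb ⁻¹' Hc} := by
  classical
  by_cases hS : IsEmpty S
  · ext H
    simp only [hypSys, Set.mem_setOf_eq]
    constructor
    · rintro ⟨g, x, -⟩
      exact (hS.false x).elim
    · rintro ⟨Hc, ⟨g, x, -⟩, -, -⟩
      exact (hS.false x.2).elim
  haveI hSne : Nonempty S := not_isEmpty_iff.mp hS
  ext H
  simp only [hypSys, Set.mem_setOf_eq]
  constructor
  · rintro ⟨w, s, rfl⟩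
    obtain ⟨ω, rfl⟩ := G.cs.wordProd_surjective w
    refine ⟨rhoF (HypAux.pw G ω) '' wallH (ι × S) (G.FD.unit, s),
      ⟨HypAux.pw G ω, (G.FD.unit, s), rfl⟩, ?_, ?_⟩
    · set Z₀ : S → ℝ := fun t => if t = s then (0:ℝ) else 1 with hZ₀
      have hZ₀int : Z₀ ∈ interior (titsT rhoE) :=
        HypAux.wallpoint_interior G rhoE hrhoE s
      have hZint : rhoE (G.cs.wordProd ω) Z₀ ∈ interior (titsT rhoE) := by
        rw [← HypAux.interior_titsT_image rhoE (G.cs.wordProd ω)]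
        exact ⟨Z₀, hZ₀int, rfl⟩
      refine ⟨G.emb (rhoE (G.cs.wordProd ω) Z₀), ⟨G.emb Z₀, ?_, ?_⟩, ?_⟩
      · show G.emb Z₀ (G.FD.unit, s) = 0
        simp [GeomSetting.emb, hZ₀]
      · exact HypAux.pw_emb G rhoF hrhoF rhoE hrhoE ω Z₀
      · exact ⟨rhoE (G.cs.wordProd ω) Z₀, hZint, rfl⟩
    · rw [HypAux.emb_preimage G rhoF hrhoF rhoE hrhoE ω _,
        HypAux.emb_preimage_wall G G.FD.unit s]
  · rintro ⟨Hc, ⟨g, p₀, rfl⟩, hne, rfl⟩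
    set fch : ((ι × S) → ℝ) → ℝ := fun x => (rhoF g⁻¹) x p₀ with hfch
    set gam : G.Wcheck → (ι × S) → ℝ :=
      fun u r => HypAux.Rt G rhoF (g⁻¹ * u) p₀ r with hgam
    have Hc_eq : rhoF g '' wallH (ι × S) p₀ = {x | fch x = 0} := by
      ext x
      constructor
      · rintro ⟨y, hy, rfl⟩
        show fch (rhoF g y) = 0
        simp only [hfch]
        rw [HypAux.rep_inv_app' rhoF g y]
        exact hy
      · intro hx
        exact ⟨rhoF g⁻¹ x, hx, HypAux.rep_inv_app rhoF g x⟩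
    have eval_gam : ∀ (u : G.Wcheck) (y : (ι × S) → ℝ),
        fch (rhoF u y) = ∑ r, y r * gam u r := by
      intro u y
      have h1 : fch (rhoF u y) = (rhoF (g⁻¹ * u)) y p₀ := by
        simp only [hfch]
        rw [HypAux.rep_mul_app]
      rw [h1]
      have hrepr : y = ∑ r : ι × S, y r • (Pi.single r (1:ℝ) : (ι × S) → ℝ) := by
        funext q
        rw [Finset.sum_apply]
        rw [Finset.sum_eq_single q (fun r _ hrq => by
            rw [Pi.smul_apply, Pi.single_eq_of_ne (Ne.symm hrq), smul_eq_mul, mul_zero])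
          (fun h => absurd (Finset.mem_univ q) h)]
        rw [Pi.smul_apply, Pi.single_eq_same, smul_eq_mul, mul_one]
      conv_lhs => rw [hrepr]
      rw [map_sum, Finset.sum_apply]
      refine Finset.sum_congr rfl fun r _ => ?_
      rw [map_smul, Pi.smul_apply, smul_eq_mul]
      simp only [hgam]
      rfl
    have gam_dich : ∀ u, (∀ r, 0 ≤ gam u r) ∨ (∀ r, gam u r ≤ 0) := by
      intro u
      rcases HypAux.Rt_sign G rhoF hrhoF (g⁻¹ * u) p₀ with h | h
      · exact Or.inl fun r => h r
      · exact Or.inr fun r => h r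
    have gam_ne : ∀ u : G.Wcheck, ∃ r, gam u r ≠ 0 := by
      intro u
      by_contra hall
      push_neg at hall
      have hzero : ∀ y : (ι × S) → ℝ, fch (rhoF u y) = 0 := by
        intro y
        rw [eval_gam]
        exact Finset.sum_eq_zero fun r _ => by rw [hall r, mul_zero]
      have h1 : fch (rhoF u (rhoF u⁻¹ (rhoF g (Pi.single p₀ 1)))) = 0 := hzero _
      rw [HypAux.rep_inv_app rhoF u] at h1
      simp only [hfch] at h1
      rw [HypAux.rep_inv_app' rhoF g, Pi.single_eq_same] at h1
      exact one_ne_zero h1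
    have gam_step : ∀ (u : G.Wcheck) (c : ι × S) (r : ι × S), r ≠ c →
        gam (u * G.gen c) r = gam u r := by
      intro u c r hrc
      simp only [hgam]
      rw [← mul_assoc]
      unfold HypAux.Rt
      rw [HypAux.rep_mul_app]
      have harg : rhoF (G.gen c) (Pi.single r (1:ℝ)) = Pi.single r 1 := by
        funext q
        rw [hrhoF, Pi.single_eq_of_ne (Ne.symm hrc)]
        ring
      rw [harg]
    obtain ⟨x0, hx0Hc, Z, hZint, hZemb⟩ := hne
    have hphiZ : fch (G.emb Z) = 0 := by
      rw [hZemb]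
      rw [Hc_eq] at hx0Hc
      exact hx0Hc
    have chamber_val : ∀ (ω : List S) (Y : S → ℝ),
        fch (G.emb (rhoE (G.cs.wordProd ω) Y))
          = ∑ r, G.emb Y r * gam (HypAux.pw G ω) r := by
      intro ω Y
      rw [← HypAux.pw_emb G rhoF hrhoF rhoE hrhoE ω Y, eval_gam]
    have embY_pos : ∀ (Y : S → ℝ), (∀ t, 0 < Y t) → ∀ r : ι × S, 0 < G.emb Y r :=
      fun Y hY r => mul_pos (HypAux.dd_pos G r.1) (hY r.2)
    have hphicont : Continuous fun Z' : S → ℝ => fch (G.emb Z') := by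
      have hrw : (fun Z' : S → ℝ => fch (G.emb Z'))
          = fun Z' : S → ℝ =>
            ∑ r : ι × S, (G.FP (G.FD.b r.1) * Z' r.2) * gam 1 r := by
        funext Z'
        have h1 : fch (G.emb Z') = fch (rhoF 1 (G.emb Z')) := by
          rw [HypAux.rep_one_app rhoF]
        rw [h1, eval_gam]
        rfl
      rw [hrw]
      exact continuous_finset_sum _ fun r _ =>
        (continuous_const.mul (continuous_apply r.2)).mul continuous_const
    have hTopen : IsOpen (interior (titsT rhoE)) := isOpen_interior
    obtain ⟨ω₁, Y₁, hY₁, hmem₁⟩ := HypAux.chamber_dense G rhoE hTopen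
      ⟨Z, hZint, interior_subset hZint⟩
    set Z₁ := rhoE (G.cs.wordProd ω₁) Y₁ with hZ₁
    set c₁ := fch (G.emb Z₁) with hc₁
    have hc₁ne : c₁ ≠ 0 := by
      rw [hc₁, hZ₁, chamber_val]
      rcases gam_dich (HypAux.pw G ω₁) with h | h
      · obtain ⟨r₀, hr₀⟩ := gam_ne (HypAux.pw G ω₁)
        have hpos : 0 < ∑ r, G.emb Y₁ r * gam (HypAux.pw G ω₁) r := by
          refine Finset.sum_pos'
            (fun r _ => mul_nonneg (le_of_lt (embY_pos Y₁ hY₁ r)) (h r)) ?_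
          exact ⟨r₀, Finset.mem_univ r₀,
            mul_pos (embY_pos Y₁ hY₁ r₀) (lt_of_le_of_ne (h r₀) (Ne.symm hr₀))⟩
        exact ne_of_gt hpos
      · obtain ⟨r₀, hr₀⟩ := gam_ne (HypAux.pw G ω₁)
        have hneg : 0 < ∑ r, G.emb Y₁ r * (-(gam (HypAux.pw G ω₁) r)) := by
          refine Finset.sum_pos'
            (fun r _ => mul_nonneg (le_of_lt (embY_pos Y₁ hY₁ r)) (by linarith [h r])) ?_
          refine ⟨r₀, Finset.mem_univ r₀, mul_pos (embY_pos Y₁ hY₁ r₀) ?_⟩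
          have h2 : gam (HypAux.pw G ω₁) r₀ < 0 := lt_of_le_of_ne (h r₀) hr₀
          linarith
        have hrel : ∑ r, G.emb Y₁ r * gam (HypAux.pw G ω₁) r
            = -∑ r, G.emb Y₁ r * (-(gam (HypAux.pw G ω₁) r)) := by
          rw [← Finset.sum_neg_distrib]
          exact Finset.sum_congr rfl fun r _ => by ring
        rw [hrel]
        intro hcon
        rw [neg_eq_zero] at hcon
        linarith
    have hcontδ : Continuous fun δ : ℝ => Z + δ • Z₁ :=
      continuous_const.add (continuous_id.smul continuous_const)
    have hev : ∀ᶠ δ in nhds (0:ℝ), Z + δ • Z₁ ∈ interior (titsT rhoE) := by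
      have htd : Filter.Tendsto (fun δ : ℝ => Z + δ • Z₁) (nhds 0) (nhds Z) := by
        have h0 : Z + (0:ℝ) • Z₁ = Z := by simp
        have h1 := hcontδ.tendsto (0:ℝ)
        rwa [h0] at h1
      exact htd.eventually (hTopen.eventually_mem hZint)
    obtain ⟨δ₀, hδ₀, hball⟩ := Metric.eventually_nhds_iff_ball.mp hev
    have hlin : ∀ δ : ℝ, fch (G.emb (Z + δ • Z₁)) = δ * c₁ := by
      intro δ
      have h1 : G.emb (Z + δ • Z₁) = G.emb Z + δ • G.emb Z₁ := by
        funext r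
        show G.FP (G.FD.b r.1) * (Z + δ • Z₁) r.2 = _
        simp only [Pi.add_apply, Pi.smul_apply, smul_eq_mul, GeomSetting.emb]
        ring
      rw [h1]
      simp only [hfch, hc₁]
      rw [map_add, map_smul]
      simp only [Pi.add_apply, Pi.smul_apply, smul_eq_mul]
      have h2 : (rhoF g⁻¹) (G.emb Z) p₀ = 0 := hphiZ
      rw [h2]
      ring
    have hhalf : |δ₀/2| < δ₀ := by
      rw [abs_of_pos (by linarith)]
      linarith
    have hmemp : Z + (δ₀/2) • Z₁ ∈ interior (titsT rhoE) := by
      apply hball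
      rw [Metric.mem_ball, Real.dist_eq, sub_zero]
      exact hhalf
    have hmemm : Z + (-(δ₀/2)) • Z₁ ∈ interior (titsT rhoE) := by
      apply hball
      rw [Metric.mem_ball, Real.dist_eq, sub_zero, abs_neg]
      exact hhalf
    have hvalp := hlin (δ₀/2)
    have hvalm := hlin (-(δ₀/2))
    have hexists : (∃ Zp, Zp ∈ interior (titsT rhoE) ∧ 0 < fch (G.emb Zp)) ∧
        (∃ Zm, Zm ∈ interior (titsT rhoE) ∧ fch (G.emb Zm) < 0) := by
      rcases lt_or_gt_of_ne hc₁ne with hlt | hgt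
      · exact ⟨⟨Z + (-(δ₀/2)) • Z₁, hmemm, by rw [hvalm]; nlinarith⟩,
          ⟨Z + (δ₀/2) • Z₁, hmemp, by rw [hvalp]; nlinarith⟩⟩
      · exact ⟨⟨Z + (δ₀/2) • Z₁, hmemp, by rw [hvalp]; nlinarith⟩,
          ⟨Z + (-(δ₀/2)) • Z₁, hmemm, by rw [hvalm]; nlinarith⟩⟩
    obtain ⟨⟨Zp, hZp, hZpv⟩, ⟨Zm, hZm, hZmv⟩⟩ := hexists
    have hUp : IsOpen (interior (titsT rhoE) ∩ {Z' | 0 < fch (G.emb Z')}) :=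
      hTopen.inter (isOpen_lt continuous_const hphicont)
    have hUm : IsOpen (interior (titsT rhoE) ∩ {Z' | fch (G.emb Z') < 0}) :=
      hTopen.inter (isOpen_lt hphicont continuous_const)
    obtain ⟨ω', Y', hY', hmem'⟩ := HypAux.chamber_dense G rhoE hUp
      ⟨Zp, ⟨hZp, hZpv⟩, interior_subset hZp⟩
    obtain ⟨ω₂, Y₂, hY₂, hmem₂⟩ := HypAux.chamber_dense G rhoE hUm
      ⟨Zm, ⟨hZm, hZmv⟩, interior_subset hZm⟩
    obtain ⟨ρ, hρ⟩ := G.cs.wordProd_surjective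
      ((G.cs.wordProd ω')⁻¹ * G.cs.wordProd ω₂)
    set χ : ℕ → List S := fun k => ω' ++ ρ.take k with hχ
    set P : ℕ → Prop := fun k => ∀ r, 0 ≤ gam (HypAux.pw G (χ k)) r with hP
    have hsign_pos : ∀ (ω : List S) (Y : S → ℝ), (∀ t, 0 < Y t) →
        0 < fch (G.emb (rhoE (G.cs.wordProd ω) Y)) →
        ∀ r, 0 ≤ gam (HypAux.pw G ω) r := by
      intro ω Y hY hval
      rcases gam_dich (HypAux.pw G ω) with h | h
      · exact h
      · exfalso
        rw [chamber_val] at hval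
        have hle : ∑ r, G.emb Y r * gam (HypAux.pw G ω) r ≤ 0 :=
          Finset.sum_nonpos fun r _ =>
            mul_nonpos_of_nonneg_of_nonpos (le_of_lt (embY_pos Y hY r)) (h r)
        linarith
    have hP0 : P 0 := by
      have hχ0 : χ 0 = ω' := by simp [hχ]
      show ∀ r, 0 ≤ gam (HypAux.pw G (χ 0)) r
      rw [hχ0]
      exact hsign_pos ω' Y' hY' hmem'.2
    have hPK : ¬ P ρ.length := by
      have hχK : χ ρ.length = ω' ++ ρ := by simp [hχ]
      intro hcon
      have hval : fch (G.emb (rhoE (G.cs.wordProd (χ ρ.length)) Y₂)) < 0 := by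
        rw [hχK, G.cs.wordProd_append, hρ, mul_inv_cancel_left]
        exact hmem₂.2
      rw [chamber_val] at hval
      have hge : 0 ≤ ∑ r, G.emb Y₂ r * gam (HypAux.pw G (χ ρ.length)) r :=
        Finset.sum_nonneg fun r _ =>
          mul_nonneg (le_of_lt (embY_pos Y₂ hY₂ r)) (hcon r)
      linarith
    obtain ⟨k, hkK, hPk, hPk1⟩ := HypAux.discrete_ivt P ρ.length hP0 hPK
    set t := ρ.get ⟨k, hkK⟩ with ht
    have htake : ρ.take (k+1) = ρ.take k ++ [t] := by
      rw [List.take_succ, List.getElem?_eq_getElem hkK]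
      rfl
    have hχsucc : χ (k+1) = χ k ++ [t] := by
      show ω' ++ ρ.take (k+1) = (ω' ++ ρ.take k) ++ [t]
      rw [htake, List.append_assoc]
    have hpwsucc : HypAux.pw G (χ (k+1)) = HypAux.pw G (χ k) * HypAux.blk G t := by
      rw [hχsucc, HypAux.pw_append]
      congr 1
      simp [HypAux.pw]
    set ιl : List ι := Finset.univ.toList with hιl
    set yin : ℕ → G.Wcheck :=
      fun j => HypAux.pw G (χ k) * ((ιl.take j).map fun c => G.gen (c, t)).prod with hyin
    have hyin0 : yin 0 = HypAux.pw G (χ k) := by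
      simp [hyin]
    have hyinJ : yin ιl.length = HypAux.pw G (χ (k+1)) := by
      rw [hpwsucc]
      show HypAux.pw G (χ k) * ((ιl.take ιl.length).map fun c => G.gen (c, t)).prod = _
      rw [List.take_length]
      rfl
    set Q : ℕ → Prop := fun j => ∀ r, 0 ≤ gam (yin j) r with hQ
    have hQ0 : Q 0 := by
      show ∀ r, 0 ≤ gam (yin 0) r
      rw [hyin0]
      exact hPk
    have hQJ : ¬ Q ιl.length := by
      show ¬ ∀ r, 0 ≤ gam (yin ιl.length) r
      rw [hyinJ]
      exact hPk1
    obtain ⟨j, hjJ, hQj, hQj1⟩ := HypAux.discrete_ivt Q ιl.length hQ0 hQJ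
    set cc := ιl.get ⟨j, hjJ⟩ with hcc
    have htakej : ιl.take (j+1) = ιl.take j ++ [cc] := by
      rw [List.take_succ, List.getElem?_eq_getElem hjJ]
      rfl
    have hstep : yin (j+1) = yin j * G.gen (cc, t) := by
      show HypAux.pw G (χ k) * ((ιl.take (j+1)).map fun c => G.gen (c, t)).prod = _
      rw [htakej, List.map_append, List.prod_append]
      show _ = HypAux.pw G (χ k) * ((ιl.take j).map fun c => G.gen (c, t)).prod
          * G.gen (cc, t)
      rw [List.map_singleton, List.prod_singleton]
      simp [mul_assoc]
    have hQneg : ∀ r, gam (yin (j+1)) r ≤ 0 := by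
      rcases gam_dich (yin (j+1)) with h | h
      · exact absurd h hQj1
      · exact h
    have hzero : ∀ r, r ≠ (cc, t) → gam (yin j) r = 0 := by
      intro r hr
      have h1 : gam (yin (j+1)) r = gam (yin j) r := by
        rw [hstep]
        exact gam_step (yin j) (cc, t) r hr
      have h2 := hQj r
      have h3 := hQneg r
      rw [h1] at h3
      linarith
    have hcne : gam (yin j) (cc, t) ≠ 0 := by
      intro h0
      obtain ⟨r, hr⟩ := gam_ne (yin j)
      by_cases hrc : r = (cc, t)
      · rw [hrc] at hr; exact hr h0
      · exact hr (hzero r hrc)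
    have hde : ∀ x : (ι × S) → ℝ,
        fch x = (rhoF (yin j)⁻¹) x (cc, t) * gam (yin j) (cc, t) := by
      intro x
      conv_lhs => rw [← HypAux.rep_inv_app rhoF (yin j) x]
      rw [eval_gam]
      rw [Finset.sum_eq_single (cc, t)
        (fun r _ hrc => by rw [hzero r hrc, mul_zero])
        (fun h => absurd (Finset.mem_univ _) h)]
    have hHc : rhoF g '' wallH (ι × S) p₀ = rhoF (yin j) '' wallH (ι × S) (cc, t) := by
      rw [Hc_eq]
      ext x
      constructor
      · intro hx
        refine ⟨rhoF (yin j)⁻¹ x, ?_, HypAux.rep_inv_app rhoF (yin j) x⟩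
        show (rhoF (yin j)⁻¹) x (cc, t) = 0
        have hx0 : fch x = 0 := hx
        rw [hde x] at hx0
        rcases mul_eq_zero.mp hx0 with h | h
        · exact h
        · exact absurd h hcne
      · rintro ⟨y, hy, rfl⟩
        show fch (rhoF (yin j) y) = 0
        rw [hde, HypAux.rep_inv_app' rhoF (yin j) y]
        rw [show y (cc, t) = 0 from hy, zero_mul]
    have hcnotin : cc ∉ ιl.take j :=
      HypAux.get_not_mem_take ιl (Finset.univ.nodup_toList) j hjJ
    have hmv : rhoF (yin j) '' wallH (ι × S) (cc, t)
        = rhoF (HypAux.pw G (χ k)) '' wallH (ι × S) (cc, t) := by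
      have himg : rhoF (HypAux.pw G (χ k)) ''
            (rhoF (((ιl.take j).map fun c => G.gen (c, t)).prod) ''
              wallH (ι × S) (cc, t))
          = rhoF (yin j) '' wallH (ι × S) (cc, t) := by
        rw [Set.image_image]
        apply Set.image_congr'
        intro x
        rw [← HypAux.rep_mul_app]
      rw [← himg, HypAux.wall_move G rhoF hrhoF t cc _ hcnotin]
    rw [hHc, hmv, HypAux.emb_preimage G rhoF hrhoF rhoE hrhoE (χ k) _,
      HypAux.emb_preimage_wall G cc t]
    exact ⟨G.cs.wordProd (χ k), t, rfl⟩


end
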